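/- Let G be a finite connected graph with N vertices. Fix k ≥ 0 and let K be a function on non-backtracking paths of length k, with associated operator K_G(x,y) = Σ K(x_0;x_k) summed over non-backtracking paths from x to y of length k. Then (1/N)Σ_{x,y∈V}|K_G(x,y)|² ≤ (1/N)Σ_{(x_0;x_k)∈B_k}|K(x_0;x_k)|² + c_{k,q}·(#{x∈V : ρ_G(x) < k}/N)·sup|K|², where ρ_G(x) is the injectivity radius at x (the largest ρ such that the ball B_G(x,ρ) is a tree), and c_{k,q} is a constant depending only on k and the maximal degree q+1 of G (one may take c_{k,q} = |B(x,k)|²_max). -/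

import Mathlib

open Finset

variable {V : Type*}

/-- A non-backtracking walk of length `n`: consecutive vertices are adjacent and
`p (i+2) ≠ p i`. -/
def IsNBWalk (G : SimpleGraph V) {n : ℕ} (p : Fin (n + 1) → V) : Prop :=
  (∀ i j : Fin (n + 1), (j : ℕ) = (i : ℕ) + 1 → G.Adj (p i) (p j)) ∧
  (∀ i j : Fin (n + 1), (j : ℕ) = (i : ℕ) + 2 → p j ≠ p i)

instance (G : SimpleGraph V) [DecidableEq V] [DecidableRel G.Adj] (n : ℕ) :
    DecidablePred (IsNBWalk G (n := n)) := fun _ => by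
  unfold IsNBWalk; infer_instance

variable {W : Type*}

/-- Build a `Walk` from a vertex function with adjacency between consecutive entries. -/
def walkOfFn (G : SimpleGraph W) : ∀ {n : ℕ} (p : Fin (n + 1) → W),
    (∀ i j : Fin (n + 1), (j : ℕ) = (i : ℕ) + 1 → G.Adj (p i) (p j)) →
    G.Walk (p 0) (p (Fin.last n))
  | 0, p, _ => (SimpleGraph.Walk.nil).copy rfl (by rw [Fin.last]; rfl)
  | (n+1), p, h =>
      (SimpleGraph.Walk.cons
        (h 0 1 (by simp) : G.Adj (p 0) (p 1))
        ((walkOfFn G (p ∘ Fin.succ) (fun i j hij => by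
            apply h i.succ j.succ
            simp [Fin.val_succ, hij])).copy
          (by simp [Fin.succ_zero_eq_one]) (by simp [Fin.succ_last])))

theorem walkOfFn_support (G : SimpleGraph W) : ∀ {n : ℕ} (p : Fin (n + 1) → W)
    (h : ∀ i j : Fin (n + 1), (j : ℕ) = (i : ℕ) + 1 → G.Adj (p i) (p j)),
    (walkOfFn G p h).support = List.ofFn p
  | 0, p, h => by
    simp [walkOfFn, List.ofFn_succ]
  | (n+1), p, h => by
    rw [walkOfFn]
    simp only [SimpleGraph.Walk.support_cons, SimpleGraph.Walk.support_copy]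
    erw [walkOfFn_support G (p ∘ Fin.succ)]
    rw [List.ofFn_succ (f := p), List.ofFn_succ (f := p ∘ Fin.succ)]
    simp [Function.comp, Fin.succ_zero_eq_one]

theorem walkOfFn_length (G : SimpleGraph W) : ∀ {n : ℕ} (p : Fin (n + 1) → W)
    (h : ∀ i j : Fin (n + 1), (j : ℕ) = (i : ℕ) + 1 → G.Adj (p i) (p j)),
    (walkOfFn G p h).length = n
  | 0, p, h => by simp [walkOfFn]
  | (n+1), p, h => by
    rw [walkOfFn]
    erw [SimpleGraph.Walk.length_cons, SimpleGraph.Walk.length_copy, walkOfFn_length G (p ∘ Fin.succ)]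

theorem nb_inj (G : SimpleGraph W) (hG : G.IsAcyclic) : ∀ {n : ℕ} (p : Fin (n + 1) → W),
    (∀ i j : Fin (n + 1), (j : ℕ) = (i : ℕ) + 1 → G.Adj (p i) (p j)) →
    (∀ i j : Fin (n + 1), (j : ℕ) = (i : ℕ) + 2 → p j ≠ p i) →
    Function.Injective p
  | 0, p, _, _ => fun a b _ => Fin.ext (by omega)
  | (n+1), p, hadj, hnb => by
    set t : Fin (n + 1) → W := p ∘ Fin.succ with ht_def
    have tadj : ∀ i j : Fin (n + 1), (j : ℕ) = (i : ℕ) + 1 → G.Adj (t i) (t j) :=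
      fun i j h => hadj i.succ j.succ (by simp [Fin.val_succ, h])
    have tnb : ∀ i j : Fin (n + 1), (j : ℕ) = (i : ℕ) + 2 → t j ≠ t i :=
      fun i j h => hnb i.succ j.succ (by simp [Fin.val_succ, h])
    have ht : Function.Injective t := nb_inj G hG t tadj tnb
    -- shifted injectivity on ℕ indices
    have hps : ∀ (a b : ℕ) (ha : a + 1 < n + 2) (hb : b + 1 < n + 2),
        p ⟨a + 1, ha⟩ = p ⟨b + 1, hb⟩ → a = b := by
      intro a b ha hb h
      have : t ⟨a, by omega⟩ = t ⟨b, by omega⟩ := h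
      have := ht this
      simpa [Fin.mk.injEq] using this
    have key : ∀ j : Fin (n + 2), p j = p 0 → j = 0 := by
      intro j hpj
      by_contra hj
      have hj1 : 1 ≤ (j : ℕ) := by
        rcases Nat.eq_zero_or_pos (j : ℕ) with h | h
        · exact absurd (Fin.ext h) hj
        · exact h
      have hjlt : (j : ℕ) < n + 2 := j.isLt
      -- exclude length 1 and 2
      have hj2 : (j : ℕ) ≠ 1 := by
        intro h1
        exact (hadj 0 j (by simp [h1])).ne (hpj.symm)
      have hj3 : (j : ℕ) ≠ 2 := by
        intro h2
        exact hnb 0 j (by simp [h2]) hpj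
      have hjge : 3 ≤ (j : ℕ) := by omega
      set m : ℕ := (j : ℕ) - 2 with hm
      have hm1 : 1 ≤ m := by omega
      -- walk B : p2, p3, ..., pj = p0
      set q : Fin (m + 1) → W := fun i => p ⟨(i : ℕ) + 2, by omega⟩ with hq_def
      have hqadj : ∀ i j' : Fin (m + 1), (j' : ℕ) = (i : ℕ) + 1 → G.Adj (q i) (q j') := by
        intro i j' h
        exact hadj ⟨(i : ℕ) + 2, by omega⟩ ⟨(j' : ℕ) + 2, by omega⟩ (by simp [h])
      have hqinj : Function.Injective q := by
        intro i i' h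
        have := hps ((i : ℕ) + 1) ((i' : ℕ) + 1) (by omega) (by omega) h
        exact Fin.ext (by omega)
      -- walk A : p2, p1, p0
      set r : Fin 3 → W := fun i => p ⟨2 - (i : ℕ), by omega⟩ with hr_def
      have hradj : ∀ i j' : Fin 3, (j' : ℕ) = (i : ℕ) + 1 → G.Adj (r i) (r j') := by
        intro i j' h
        exact (hadj ⟨2 - (j' : ℕ), by omega⟩ ⟨2 - (i : ℕ), by omega⟩
          (by simp [h]; omega)).symm
      have h21 : p ⟨2, by omega⟩ ≠ p ⟨1, by omega⟩ :=
        (hadj ⟨1, by omega⟩ ⟨2, by omega⟩ (by simp)).ne'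
      have h10 : p ⟨1, by omega⟩ ≠ p ⟨0, by omega⟩ :=
        (hadj ⟨0, by omega⟩ ⟨1, by omega⟩ (by simp)).ne'
      have h20 : p ⟨2, by omega⟩ ≠ p ⟨0, by omega⟩ :=
        hnb ⟨0, by omega⟩ ⟨2, by omega⟩ (by simp)
      have claim : ∀ (a b : ℕ) (ha : a < 3) (hb : b < 3), a ≠ b →
          p ⟨2 - a, by omega⟩ ≠ p ⟨2 - b, by omega⟩ := by
        intro a b ha hb hab
        interval_cases a <;> interval_cases b <;>
          first
          | exact absurd rfl hab
          | exact h21 | exact fun h => h21 h.symm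
          | exact h10 | exact fun h => h10 h.symm
          | exact h20 | exact fun h => h20 h.symm
      have hrinj : Function.Injective r := by
        intro i i' h
        apply Fin.ext
        by_contra hv
        exact claim (i : ℕ) (i' : ℕ) i.isLt i'.isLt hv h
      have e00 : (⟨0, by omega⟩ : Fin (n + 2)) = 0 := by exact Fin.ext (by simp)
      have eA0 : r 0 = p ⟨2, by omega⟩ := by
        apply congrArg p; exact Fin.ext (by simp)
      have eAl : r (Fin.last 2) = p 0 := by
        rw [show r (Fin.last 2) = p ⟨0, by omega⟩ from congrArg p (Fin.ext (by simp)), e00]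
      have eB0 : q 0 = p ⟨2, by omega⟩ := by
        apply congrArg p; exact Fin.ext (by simp)
      have eBl : q (Fin.last m) = p 0 := by
        rw [show q (Fin.last m) = p j from congrArg p (Fin.ext (by simp [Fin.last]; omega))]
        exact hpj
      set WA : G.Walk (p ⟨2, by omega⟩) (p 0) := (walkOfFn G r hradj).copy eA0 eAl with hWA
      set WB : G.Walk (p ⟨2, by omega⟩) (p 0) := (walkOfFn G q hqadj).copy eB0 eBl with hWB
      have hWAp : WA.IsPath := by
        rw [SimpleGraph.Walk.isPath_def, hWA, SimpleGraph.Walk.support_copy,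
          walkOfFn_support]
        exact List.nodup_ofFn.mpr hrinj
      have hWBp : WB.IsPath := by
        rw [SimpleGraph.Walk.isPath_def, hWB, SimpleGraph.Walk.support_copy,
          walkOfFn_support]
        exact List.nodup_ofFn.mpr hqinj
      have := SimpleGraph.isAcyclic_iff_path_unique.mp hG ⟨WA, hWAp⟩ ⟨WB, hWBp⟩
      have hWAB : WA = WB := congrArg Subtype.val this
      have hsupp : WA.support = WB.support := congrArg SimpleGraph.Walk.support hWAB
      have hmem : p ⟨1, by omega⟩ ∈ WA.support := by
        rw [hWA, SimpleGraph.Walk.support_copy, walkOfFn_support, List.mem_ofFn]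
        exact ⟨1, congrArg p (Fin.ext (by simp))⟩
      rw [hsupp, hWB, SimpleGraph.Walk.support_copy, walkOfFn_support, List.mem_ofFn] at hmem
      obtain ⟨i, hi⟩ := hmem
      have := hps ((i : ℕ) + 1) 0 (by omega) (by omega) hi
      omega
    intro a b hab
    by_cases ha : a = 0
    · subst ha; exact (key b hab.symm).symm
    by_cases hb : b = 0
    · subst hb; exact key a hab
    obtain ⟨a', rfl⟩ := Fin.exists_succ_eq.mpr ha
    obtain ⟨b', rfl⟩ := Fin.exists_succ_eq.mpr hb
    exact congrArg Fin.succ (ht hab)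
theorem nb_unique {W : Type*} (G : SimpleGraph W) (hG : G.IsAcyclic) {n : ℕ}
    (p p' : Fin (n + 1) → W) (hp : IsNBWalk G p) (hp' : IsNBWalk G p')
    (h0 : p 0 = p' 0) (hl : p (Fin.last n) = p' (Fin.last n)) : p = p' := by
  have hPA : ((walkOfFn G p hp.1).IsPath) := by
    rw [SimpleGraph.Walk.isPath_def, walkOfFn_support]
    exact List.nodup_ofFn.mpr (nb_inj G hG p hp.1 hp.2)
  have hPB : ((walkOfFn G p' hp'.1).copy h0.symm hl.symm).IsPath := by
    rw [SimpleGraph.Walk.isPath_def, SimpleGraph.Walk.support_copy, walkOfFn_support]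
    exact List.nodup_ofFn.mpr (nb_inj G hG p' hp'.1 hp'.2)
  have := SimpleGraph.isAcyclic_iff_path_unique.mp hG ⟨_, hPA⟩ ⟨_, hPB⟩
  have hw : walkOfFn G p hp.1 = (walkOfFn G p' hp'.1).copy h0.symm hl.symm :=
    congrArg Subtype.val this
  have hs := congrArg SimpleGraph.Walk.support hw
  rw [walkOfFn_support, SimpleGraph.Walk.support_copy, walkOfFn_support] at hs
  exact List.ofFn_injective hs

theorem nb_ball_unique {V : Type*} (G : SimpleGraph V) {k : ℕ} (x : V)
    (hx : (SimpleGraph.induce {y : V | G.dist x y ≤ k} G).IsAcyclic)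
    {p p' : Fin (k + 1) → V} (hp : IsNBWalk G p) (hp' : IsNBWalk G p')
    (h0 : p 0 = x) (h0' : p' 0 = x) (hl : p (Fin.last k) = p' (Fin.last k)) : p = p' := by
  have hdist : ∀ (p : Fin (k + 1) → V), IsNBWalk G p → p 0 = x →
      ∀ i : Fin (k + 1), G.dist x (p i) ≤ k := by
    intro p hp h0 i
    set r : Fin ((i : ℕ) + 1) → V := fun j => p ⟨(j : ℕ), by omega⟩ with hr
    have hradj : ∀ a b : Fin ((i : ℕ) + 1), (b : ℕ) = (a : ℕ) + 1 → G.Adj (r a) (r b) :=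
      fun a b hab => hp.1 ⟨(a : ℕ), by omega⟩ ⟨(b : ℕ), by omega⟩ (by simp [hab])
    have e0 : r 0 = x := by
      rw [show r 0 = p ⟨0, by omega⟩ from congrArg p (Fin.ext (by simp)),
        show (⟨0, by omega⟩ : Fin (k + 1)) = 0 from Fin.ext (by simp), h0]
    have el : r (Fin.last (i : ℕ)) = p i := congrArg p (Fin.ext (by simp [Fin.last]))
    have := SimpleGraph.dist_le ((walkOfFn G r hradj).copy e0 el)
    rw [SimpleGraph.Walk.length_copy, walkOfFn_length] at this
    exact le_trans this (by omega)
  set S : Set V := {y : V | G.dist x y ≤ k} with hS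
  set pt : Fin (k + 1) → S := fun i => ⟨p i, hdist p hp h0 i⟩ with hpt
  set pt' : Fin (k + 1) → S := fun i => ⟨p' i, hdist p' hp' h0' i⟩ with hpt'
  have hnb : IsNBWalk (SimpleGraph.induce S G) pt :=
    ⟨fun i j hij => hp.1 i j hij, fun i j hij h => hp.2 i j hij (congrArg Subtype.val h)⟩
  have hnb' : IsNBWalk (SimpleGraph.induce S G) pt' :=
    ⟨fun i j hij => hp'.1 i j hij, fun i j hij h => hp'.2 i j hij (congrArg Subtype.val h)⟩
  have h00 : pt 0 = pt' 0 := Subtype.ext (h0.trans h0'.symm)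
  have hll : pt (Fin.last k) = pt' (Fin.last k) := Subtype.ext hl
  have := nb_unique _ hx pt pt' hnb hnb' h00 hll
  funext i
  exact congrArg Subtype.val (congrFun this i)

theorem nb_count_step {V : Type*} [Fintype V] [DecidableEq V] (G : SimpleGraph V)
    [DecidableRel G.Adj] (q : ℕ) (hdeg : ∀ v : V, G.degree v ≤ q + 1) (x : V) (n : ℕ) :
    (Finset.univ.filter (fun p : Fin (n + 1 + 1 + 1) → V => IsNBWalk G p ∧ p 0 = x)).card ≤
      q * (Finset.univ.filter (fun p : Fin (n + 1 + 1) → V => IsNBWalk G p ∧ p 0 = x)).card := by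
  set A := Finset.univ.filter (fun p : Fin (n + 1 + 1 + 1) → V => IsNBWalk G p ∧ p 0 = x)
    with hA
  set g : (Fin (n + 1 + 1 + 1) → V) → (Fin (n + 1 + 1) → V) :=
    fun p => p ∘ Fin.castSucc with hg
  have hcard : A.card ≤ q * (A.image g).card := by
    apply Finset.card_le_mul_card_image
    intro b hb
    obtain ⟨p₀, hp₀A, hgp₀⟩ := Finset.mem_image.mp hb
    have hp₀ : IsNBWalk G p₀ ∧ p₀ 0 = x := by
      simpa only [hA, Finset.mem_filter, Finset.mem_univ, true_and] using hp₀A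
    have hbadj : G.Adj (b ⟨n, by omega⟩) (b ⟨n + 1, by omega⟩) := by
      rw [← hgp₀]
      exact hp₀.1.1 (Fin.castSucc ⟨n, by omega⟩) (Fin.castSucc ⟨n + 1, by omega⟩)
        (by simp)
    have hmem : b ⟨n, by omega⟩ ∈ G.neighborFinset (b ⟨n + 1, by omega⟩) := by
      rw [SimpleGraph.mem_neighborFinset]; exact hbadj.symm
    have hfib : (A.filter (fun a => g a = b)).card ≤
        ((G.neighborFinset (b ⟨n + 1, by omega⟩)).erase (b ⟨n, by omega⟩)).card := by
      apply Finset.card_le_card_of_injOn (fun p => p (Fin.last (n + 2)))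
      · intro p hp
        rw [Finset.mem_coe, Finset.mem_filter] at hp
        obtain ⟨hpA, hgb⟩ := hp
        have hnbx : IsNBWalk G p ∧ p 0 = x := by
          simpa only [hA, Finset.mem_filter, Finset.mem_univ, true_and] using hpA
        have e1 : b ⟨n + 1, by omega⟩ = p ⟨n + 1, by omega⟩ := by
          rw [← hgb]; exact congrArg p (Fin.ext (by simp))
        have e0 : b ⟨n, by omega⟩ = p ⟨n, by omega⟩ := by
          rw [← hgb]; exact congrArg p (Fin.ext (by simp))
        rw [Finset.mem_coe, Finset.mem_erase, SimpleGraph.mem_neighborFinset, e0, e1]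
        exact ⟨hnbx.1.2 ⟨n, by omega⟩ (Fin.last (n + 2)) (by simp [Fin.last]),
          hnbx.1.1 ⟨n + 1, by omega⟩ (Fin.last (n + 2)) (by simp [Fin.last])⟩
      · intro p hp p' hp' h
        simp only [Finset.coe_filter, Set.mem_setOf_eq] at hp hp'
        funext i
        by_cases hi : (i : ℕ) < n + 2
        · have h2 : g p ⟨(i : ℕ), hi⟩ = g p' ⟨(i : ℕ), hi⟩ := by rw [hp.2, hp'.2]
          have h3 : p (Fin.castSucc ⟨(i : ℕ), hi⟩) = p' (Fin.castSucc ⟨(i : ℕ), hi⟩) := h2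
          rwa [show Fin.castSucc ⟨(i : ℕ), hi⟩ = i from Fin.ext (by simp)] at h3
        · rwa [show i = Fin.last (n + 2) from Fin.ext (by simp [Fin.last]; omega)]
    refine hfib.trans ?_
    rw [Finset.card_erase_of_mem hmem, SimpleGraph.card_neighborFinset_eq_degree]
    have := hdeg (b ⟨n + 1, by omega⟩)
    omega
  have himg : A.image g ⊆
      Finset.univ.filter (fun p : Fin (n + 1 + 1) → V => IsNBWalk G p ∧ p 0 = x) := by
    intro b hb
    obtain ⟨p₀, hp₀A, hgp₀⟩ := Finset.mem_image.mp hb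
    have hp₀ : IsNBWalk G p₀ ∧ p₀ 0 = x := by
      simpa only [hA, Finset.mem_filter, Finset.mem_univ, true_and] using hp₀A
    rw [Finset.mem_filter]
    subst hgp₀
    refine ⟨Finset.mem_univ _, ⟨fun i j hij => ?_, fun i j hij => ?_⟩, ?_⟩
    · exact hp₀.1.1 i.castSucc j.castSucc (by simp [hij])
    · exact hp₀.1.2 i.castSucc j.castSucc (by simp [hij])
    · have e : g p₀ 0 = p₀ 0 := congrArg p₀ (Fin.ext (by simp))
      rw [e]; exact hp₀.2
  calc A.card ≤ q * (A.image g).card := hcard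
    _ ≤ q * (Finset.univ.filter
        (fun p : Fin (n + 1 + 1) → V => IsNBWalk G p ∧ p 0 = x)).card :=
      Nat.mul_le_mul_left q (Finset.card_le_card himg)

theorem nb_count {V : Type*} [Fintype V] [DecidableEq V] (G : SimpleGraph V)
    [DecidableRel G.Adj] (q : ℕ) (hdeg : ∀ v : V, G.degree v ≤ q + 1) (k : ℕ) (x : V) :
    (Finset.univ.filter (fun p : Fin (k + 1) → V => IsNBWalk G p ∧ p 0 = x)).card ≤
      1 + (q + 1) * ∑ i ∈ Finset.range k, q ^ i := by
  have main : ∀ k : ℕ,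
      (Finset.univ.filter (fun p : Fin (k + 1 + 1) → V => IsNBWalk G p ∧ p 0 = x)).card ≤
        (q + 1) * q ^ k := by
    intro k
    induction k with
    | zero =>
      have : (Finset.univ.filter (fun p : Fin 2 → V => IsNBWalk G p ∧ p 0 = x)).card ≤
          (G.neighborFinset x).card := by
        apply Finset.card_le_card_of_injOn (fun p => p 1)
        · intro p hp
          simp only [Finset.mem_coe, Finset.mem_filter, Finset.mem_univ, true_and] at hp
          rw [Finset.mem_coe, SimpleGraph.mem_neighborFinset, ← hp.2]
          exact hp.1.1 0 1 (by simp)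
        · intro p hp p' hp' h
          simp only [Finset.coe_filter, Set.mem_setOf_eq] at hp hp'
          funext i
          have hi : (i : ℕ) = 0 ∨ (i : ℕ) = 1 := by omega
          rcases hi with h0 | h1
          · rw [show i = 0 from Fin.ext (by simp [h0]), hp.2.2, hp'.2.2]
          · rw [show i = 1 from Fin.ext (by simp [h1])]; exact h
      simpa [SimpleGraph.card_neighborFinset_eq_degree] using this.trans (hdeg x)
    | succ n ih =>
      calc _ ≤ q * (Finset.univ.filter
            (fun p : Fin (n + 1 + 1) → V => IsNBWalk G p ∧ p 0 = x)).card :=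
            nb_count_step G q hdeg x n
        _ ≤ q * ((q + 1) * q ^ n) := Nat.mul_le_mul_left q ih
        _ = (q + 1) * q ^ (n + 1) := by ring
  cases k with
  | zero =>
    have : (Finset.univ.filter (fun p : Fin 1 → V => IsNBWalk G p ∧ p 0 = x)).card ≤ 1 := by
      rw [Finset.card_le_one]
      intro p hp p' hp'
      simp only [Finset.mem_filter, Finset.mem_univ, true_and] at hp hp'
      funext i
      rw [show i = 0 from Fin.ext (by omega), hp.2, hp'.2]
    simpa using this
  | succ n =>
    refine le_trans (main n) ?_
    have h1 : q ^ n ≤ ∑ i ∈ Finset.range (n + 1), q ^ i :=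
      Finset.single_le_sum (fun i _ => Nat.zero_le _) (Finset.self_mem_range_succ n)
    calc (q + 1) * q ^ n ≤ (q + 1) * ∑ i ∈ Finset.range (n + 1), q ^ i :=
          Nat.mul_le_mul_left _ h1
      _ ≤ 1 + (q + 1) * ∑ i ∈ Finset.range (n + 1), q ^ i := by omega

set_option maxHeartbeats 1000000 in
/-- Hilbert–Schmidt-norm comparison: the normalized HS norm of the operator K_G built
from a kernel K on non-backtracking paths of length k is bounded by the normalized
ℓ²-norm of K plus an error controlled by the number of vertices of injectivity
radius < k. -/
theorem HSN_le_pathNorm_plus_error [Fintype V] [DecidableEq V] (G : SimpleGraph V)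
    [DecidableRel G.Adj]
    (q k : ℕ) (hdeg : ∀ v : V, G.degree v ≤ q + 1) (hconn : G.Connected)
    (K : (Fin (k + 1) → V) → ℂ) (M : ℝ) (hM : ∀ p, ‖K p‖ ≤ M) :
    (1 / (Fintype.card V : ℝ)) * ∑ x : V, ∑ y : V,
        ‖∑ p ∈ univ.filter (fun p : Fin (k + 1) → V =>
          IsNBWalk G p ∧ p 0 = x ∧ p (Fin.last k) = y), K p‖ ^ 2
      ≤ (1 / (Fintype.card V : ℝ)) *
          (∑ p ∈ univ.filter (fun p : Fin (k + 1) → V => IsNBWalk G p),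
            ‖K p‖ ^ 2)
        + (1 + ((q : ℝ) + 1) * ∑ i ∈ Finset.range k, (q : ℝ) ^ i) ^ 2 *
          ((Nat.card {x : V // ¬ (SimpleGraph.induce {y : V | G.dist x y ≤ k} G).IsAcyclic} : ℝ)
            / (Fintype.card V : ℝ)) * M ^ 2 := by
  classical
  obtain ⟨x₀⟩ := hconn.nonempty
  have hM0 : 0 ≤ M := le_trans (norm_nonneg _) (hM (fun _ => x₀))
  have hN0 : (0 : ℝ) ≤ 1 / (Fintype.card V : ℝ) := by positivity
  set c₀ : ℝ := 1 + ((q : ℝ) + 1) * ∑ i ∈ Finset.range k, (q : ℝ) ^ i with hc₀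
  set cn : ℕ := 1 + (q + 1) * ∑ i ∈ Finset.range k, q ^ i with hcn
  have hccast : (cn : ℝ) = c₀ := by rw [hcn, hc₀]; push_cast; ring
  have hc0nn : (0 : ℝ) ≤ c₀ := by rw [← hccast]; positivity
  set s : V → Finset (Fin (k + 1) → V) :=
    fun x => Finset.univ.filter (fun p => IsNBWalk G p ∧ p 0 = x) with hs
  have hfib : ∀ x y : V, Finset.univ.filter
      (fun p : Fin (k + 1) → V => IsNBWalk G p ∧ p 0 = x ∧ p (Fin.last k) = y) =
      (s x).filter (fun p => p (Fin.last k) = y) := by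
    intro x y
    ext p
    simp only [hs, Finset.mem_filter, Finset.mem_univ, true_and, and_assoc]
  have key : ∀ x : V,
      ∑ y : V, ‖∑ p ∈ univ.filter (fun p : Fin (k + 1) → V =>
          IsNBWalk G p ∧ p 0 = x ∧ p (Fin.last k) = y), K p‖ ^ 2 ≤
        (∑ p ∈ s x, ‖K p‖ ^ 2) +
        (if ¬ (SimpleGraph.induce {y : V | G.dist x y ≤ k} G).IsAcyclic
          then c₀ ^ 2 * M ^ 2 else 0) := by
    intro x
    by_cases hx : (SimpleGraph.induce {y : V | G.dist x y ≤ k} G).IsAcyclic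
    · rw [if_neg (not_not_intro hx), add_zero]
      have h1 : ∀ y : V, ‖∑ p ∈ univ.filter (fun p : Fin (k + 1) → V =>
          IsNBWalk G p ∧ p 0 = x ∧ p (Fin.last k) = y), K p‖ ^ 2 ≤
          ∑ p ∈ (s x).filter (fun p => p (Fin.last k) = y), ‖K p‖ ^ 2 := by
        intro y
        rw [hfib x y]
        have hcard : ((s x).filter (fun p => p (Fin.last k) = y)).card ≤ 1 := by
          rw [Finset.card_le_one]
          intro p hp p' hp'
          simp only [hs, Finset.mem_filter, Finset.mem_univ, true_and] at hp hp'
          exact nb_ball_unique G x hx hp.1.1 hp'.1.1 hp.1.2 hp'.1.2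
            (hp.2.trans hp'.2.symm)
        rcases Finset.eq_empty_or_nonempty
            ((s x).filter (fun p => p (Fin.last k) = y)) with he | ⟨a, ha⟩
        · rw [he]; simp
        · have hsing : (s x).filter (fun p => p (Fin.last k) = y) = {a} :=
            Finset.eq_singleton_iff_unique_mem.mpr
              ⟨ha, fun b hb => Finset.card_le_one.mp hcard b hb a ha⟩
          rw [hsing]; simp
      calc ∑ y : V, ‖∑ p ∈ univ.filter (fun p : Fin (k + 1) → V =>
              IsNBWalk G p ∧ p 0 = x ∧ p (Fin.last k) = y), K p‖ ^ 2
          ≤ ∑ y : V, ∑ p ∈ (s x).filter (fun p => p (Fin.last k) = y),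
              ‖K p‖ ^ 2 := Finset.sum_le_sum (fun y _ => h1 y)
        _ = ∑ p ∈ s x, ‖K p‖ ^ 2 :=
            Finset.sum_fiberwise (s x) (fun p => p (Fin.last k)) _
    · rw [if_pos hx]
      have h2 : ∀ y : V, ‖∑ p ∈ univ.filter (fun p : Fin (k + 1) → V =>
          IsNBWalk G p ∧ p 0 = x ∧ p (Fin.last k) = y), K p‖ ≤
          (((s x).filter (fun p => p (Fin.last k) = y)).card : ℝ) * M := by
        intro y
        rw [hfib x y]
        refine le_trans (norm_sum_le _ _) ?_
        have := Finset.sum_le_card_nsmul ((s x).filter (fun p => p (Fin.last k) = y))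
          (fun p => ‖K p‖) M (fun p _ => hM p)
        simpa [nsmul_eq_mul] using this
      have h3 : ∑ y : V, ‖∑ p ∈ univ.filter (fun p : Fin (k + 1) → V =>
          IsNBWalk G p ∧ p 0 = x ∧ p (Fin.last k) = y), K p‖ ^ 2 ≤
          (∑ y : V, (((s x).filter (fun p => p (Fin.last k) = y)).card : ℝ) * M) ^ 2 := by
        refine le_trans (Finset.sum_le_sum (fun y _ =>
          pow_le_pow_left₀ (norm_nonneg _) (h2 y) 2)) ?_
        exact Finset.sum_sq_le_sq_sum_of_nonneg (fun y _ => by positivity)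
      have h4 : ∑ y : V, (((s x).filter (fun p => p (Fin.last k) = y)).card : ℝ) * M =
          ((s x).card : ℝ) * M := by
        rw [← Finset.sum_mul]
        congr 1
        rw [← Nat.cast_sum]
        congr 1
        calc ∑ y : V, ((s x).filter (fun p => p (Fin.last k) = y)).card
            = ∑ y : V, ∑ p ∈ (s x).filter (fun p => p (Fin.last k) = y), 1 :=
              Finset.sum_congr rfl (fun y _ => Finset.card_eq_sum_ones _)
          _ = ∑ p ∈ s x, 1 := Finset.sum_fiberwise (s x) (fun p => p (Fin.last k)) _
          _ = (s x).card := (Finset.card_eq_sum_ones _).symm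
      have h5 : ((s x).card : ℝ) ≤ c₀ := by
        rw [← hccast]
        exact_mod_cast nb_count G q hdeg k x
      have h6 : (((s x).card : ℝ) * M) ^ 2 ≤ c₀ ^ 2 * M ^ 2 := by
        rw [mul_pow]
        exact mul_le_mul_of_nonneg_right
          (pow_le_pow_left₀ (by positivity) h5 2) (by positivity)
      have h7 : 0 ≤ ∑ p ∈ s x, ‖K p‖ ^ 2 :=
        Finset.sum_nonneg fun p _ => by positivity
      refine le_trans h3 ?_
      rw [h4]
      exact le_trans h6 (le_add_of_nonneg_left h7)
  set Bad : Finset V :=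
    univ.filter (fun x => ¬ (SimpleGraph.induce {y : V | G.dist x y ≤ k} G).IsAcyclic)
    with hBad
  have hssub : ∀ x : V, s x =
      (univ.filter (fun p : Fin (k + 1) → V => IsNBWalk G p)).filter (fun p => p 0 = x) := by
    intro x
    ext p
    simp only [hs, Finset.mem_filter, Finset.mem_univ, true_and, and_assoc]
  have total : ∑ x : V, ∑ y : V, ‖∑ p ∈ univ.filter
        (fun p : Fin (k + 1) → V => IsNBWalk G p ∧ p 0 = x ∧ p (Fin.last k) = y), K p‖ ^ 2 ≤
      (∑ p ∈ univ.filter (fun p : Fin (k + 1) → V => IsNBWalk G p),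
        ‖K p‖ ^ 2) + (Bad.card : ℝ) * (c₀ ^ 2 * M ^ 2) := by
    refine le_trans (Finset.sum_le_sum (fun x _ => key x)) ?_
    rw [Finset.sum_add_distrib]
    apply add_le_add
    · apply le_of_eq
      calc ∑ x : V, ∑ p ∈ s x, ‖K p‖ ^ 2
          = ∑ x : V, ∑ p ∈ (univ.filter (fun p : Fin (k + 1) → V =>
              IsNBWalk G p)).filter (fun p => p 0 = x), ‖K p‖ ^ 2 := by
            exact Finset.sum_congr rfl (fun x _ => by rw [hssub x])
        _ = ∑ p ∈ univ.filter (fun p : Fin (k + 1) → V => IsNBWalk G p),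
              ‖K p‖ ^ 2 :=
            Finset.sum_fiberwise (univ.filter (fun p : Fin (k + 1) → V => IsNBWalk G p))
              (fun p => p 0) (fun p => ‖K p‖ ^ 2)
    · apply le_of_eq
      rw [← Finset.sum_filter, Finset.sum_const, nsmul_eq_mul]
  have hNat : ((Nat.card {x : V //
      ¬ (SimpleGraph.induce {y : V | G.dist x y ≤ k} G).IsAcyclic}) : ℝ) = (Bad.card : ℝ) := by
    rw [Nat.card_eq_fintype_card, Fintype.card_subtype]
  rw [hNat]
  calc (1 / (Fintype.card V : ℝ)) * ∑ x : V, ∑ y : V,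
        ‖∑ p ∈ univ.filter (fun p : Fin (k + 1) → V =>
          IsNBWalk G p ∧ p 0 = x ∧ p (Fin.last k) = y), K p‖ ^ 2
      ≤ (1 / (Fintype.card V : ℝ)) *
          ((∑ p ∈ univ.filter (fun p : Fin (k + 1) → V => IsNBWalk G p),
            ‖K p‖ ^ 2) + (Bad.card : ℝ) * (c₀ ^ 2 * M ^ 2)) :=
        mul_le_mul_of_nonneg_left total hN0
    _ = (1 / (Fintype.card V : ℝ)) *
          (∑ p ∈ univ.filter (fun p : Fin (k + 1) → V => IsNBWalk G p),
            ‖K p‖ ^ 2)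
        + c₀ ^ 2 * ((Bad.card : ℝ) / (Fintype.card V : ℝ)) * M ^ 2 := by ring
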